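/- For every finite connected simple graph G with at least one edge, the vertex cover number and the connected vertex cover number satisfy τ(G) ≤ τ_c(G) ≤ 2·τ(G) − 1; in particular 1 ≤ τ_c(G)/τ(G) < 2. -/

import Mathlib

open SimpleGraph

/-- `C` is a vertex cover of `G`: every edge of `G` has an endpoint in `C`. -/
def IsVertexCover {V : Type} (G : SimpleGraph V) (C : Set V) : Prop :=
  ∀ ⦃u v : V⦄, G.Adj u v → u ∈ C ∨ v ∈ C

/-- `C` is a connected vertex cover of `G`: a vertex cover inducing a connected subgraph. -/
def IsConnectedVertexCover {V : Type} (G : SimpleGraph V) (C : Set V) : Prop :=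
  _root_.IsVertexCover G C ∧ (G.induce C).Connected

/-- The vertex cover number `τ(G)`. -/
noncomputable def tau {V : Type} (G : SimpleGraph V) : ℕ :=
  sInf {n | ∃ C : Set V, _root_.IsVertexCover G C ∧ C.ncard = n}

/-- The connected vertex cover number `τ_c(G)`. -/
noncomputable def tauc {V : Type} (G : SimpleGraph V) : ℕ :=
  sInf {n | ∃ C : Set V, IsConnectedVertexCover G C ∧ C.ncard = n}

/-- If a vertex cover induces a disconnected graph, then two vertices of the cover in
different components have a common neighbor outside the cover. -/
lemma bridge_aux {V : Type} {G : SimpleGraph V} {C : Set V} (hC : _root_.IsVertexCover G C) :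
    ∀ (n : ℕ) {u v : V} (p : G.Walk u v) (hu : u ∈ C) (hv : v ∈ C),
      p.length ≤ n →
      ¬ (G.induce C).Reachable ⟨u, hu⟩ ⟨v, hv⟩ →
      ∃ (a b w : V) (ha : a ∈ C) (hb : b ∈ C), w ∉ C ∧
        ¬ (G.induce C).Reachable ⟨a, ha⟩ ⟨b, hb⟩ ∧ G.Adj a w ∧ G.Adj w b := by
  intro n
  induction n with
  | zero =>
    intro u v p hu hv hlen hnr
    have h0 : p.length = 0 := Nat.le_zero.mp hlen
    have : u = v := p.eq_of_length_eq_zero h0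
    subst this
    exact absurd (Reachable.refl _) hnr
  | succ n ih =>
    intro u v p hu hv hlen hnr
    cases p with
    | nil => exact absurd (Reachable.refl _) hnr
    | @cons _ x _ h q =>
      by_cases hx : x ∈ C
      · have hadj : (G.induce C).Adj ⟨u, hu⟩ ⟨x, hx⟩ := by
          simpa using h
        by_cases hr : (G.induce C).Reachable ⟨x, hx⟩ ⟨v, hv⟩
        · exact absurd (hadj.reachable.trans hr) hnr
        · have hlen' : q.length ≤ n := by
            simp [SimpleGraph.Walk.length_cons] at hlen; omega
          exact ih q hx hv hlen' hr
      · cases q with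
        | nil => exact absurd hv hx
        | @cons _ y _ h2 r =>
          have hy : y ∈ C := by
            rcases hC h2 with h' | h'
            · exact absurd h' hx
            · exact h'
          by_cases hr : (G.induce C).Reachable ⟨u, hu⟩ ⟨y, hy⟩
          · by_cases hr2 : (G.induce C).Reachable ⟨y, hy⟩ ⟨v, hv⟩
            · exact absurd (hr.trans hr2) hnr
            · have hlen' : r.length ≤ n := by
                simp [SimpleGraph.Walk.length_cons] at hlen; omega
              exact ih r hy hv hlen' hr2
          · exact ⟨u, y, x, hu, hy, hx, hr, h, h2⟩

/-- Any nonempty vertex cover of a connected graph extends to a connected vertex cover,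
adding fewer vertices than the number of components of the induced graph. -/
lemma extend_cover {V : Type} [Fintype V] (G : SimpleGraph V) (hconn : G.Connected) :
    ∀ (k : ℕ) (C : Set V), Nat.card ((G.induce C).ConnectedComponent) ≤ k →
      C.Nonempty → _root_.IsVertexCover G C →
      ∃ D : Set V, C ⊆ D ∧ _root_.IsVertexCover G D ∧ (G.induce D).Connected ∧
        D.ncard + 1 ≤ C.ncard + Nat.card ((G.induce C).ConnectedComponent) := by
  intro k
  induction k with
  | zero =>
    intro C hk hne hvc
    exfalso
    haveI : Nonempty (↥C) := hne.to_subtype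
    haveI : Nonempty ((G.induce C).ConnectedComponent) :=
      ⟨(G.induce C).connectedComponentMk (Classical.arbitrary _)⟩
    have := Nat.card_pos (α := (G.induce C).ConnectedComponent)
    omega
  | succ k ih =>
    intro C hk hne hvc
    haveI : Nonempty (↥C) := hne.to_subtype
    haveI : Nonempty ((G.induce C).ConnectedComponent) :=
      ⟨(G.induce C).connectedComponentMk (Classical.arbitrary _)⟩
    have hcpos : 1 ≤ Nat.card ((G.induce C).ConnectedComponent) :=
      Nat.card_pos (α := (G.induce C).ConnectedComponent)
    by_cases hc : (G.induce C).Connected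
    · exact ⟨C, subset_rfl, hvc, hc, by omega⟩
    · -- find two cover vertices in different components
      have hnp : ¬ (G.induce C).Preconnected := by
        intro hp
        exact hc ⟨hp⟩
      simp only [SimpleGraph.Preconnected, not_forall] at hnp
      obtain ⟨⟨u, hu⟩, ⟨v, hv⟩, hnr⟩ := hnp
      obtain ⟨p⟩ := hconn.preconnected u v
      obtain ⟨a, b, w, ha, hb, hw, hab, haw, hwb⟩ :=
        bridge_aux hvc p.length p hu hv le_rfl hnr
      set C' : Set V := insert w C with hC'
      have hsub : C ⊆ C' := Set.subset_insert _ _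
      have hvc' : _root_.IsVertexCover G C' := fun x y hxy => by
        rcases hvc hxy with h' | h'
        · exact Or.inl (hsub h')
        · exact Or.inr (hsub h')
      have hcard' : C'.ncard = C.ncard + 1 := Set.ncard_insert_of_notMem hw C.toFinite
      -- the component count strictly decreases
      let φ : G.induce C →g G.induce C' :=
        ⟨fun x => ⟨x.1, hsub x.2⟩, fun {x y} h => h⟩
      let f : (G.induce C).ConnectedComponent → (G.induce C').ConnectedComponent :=
        SimpleGraph.ConnectedComponent.map φ
      have hsurj : Function.Surjective f := by
        intro c
        induction c using SimpleGraph.ConnectedComponent.ind with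
        | _ z =>
          obtain ⟨z, hz⟩ := z
          rcases hz with hz | hz
          · refine ⟨(G.induce C).connectedComponentMk ⟨a, ha⟩, ?_⟩
            show (G.induce C').connectedComponentMk (φ ⟨a, ha⟩) = _
            apply SimpleGraph.ConnectedComponent.sound
            have hzmem : z ∈ C' := by rw [hz]; exact Set.mem_insert _ _
            have : (G.induce C').Adj (φ ⟨a, ha⟩) ⟨z, hzmem⟩ := by
              simp only [SimpleGraph.comap_adj, Function.Embedding.coe_subtype]
              rw [hz]; exact haw
            exact this.reachable
          · exact ⟨(G.induce C).connectedComponentMk ⟨z, hz⟩, rfl⟩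
      have hninj : ¬ Function.Injective f := by
        intro hinj
        apply hab
        have hfa : f ((G.induce C).connectedComponentMk ⟨a, ha⟩)
            = f ((G.induce C).connectedComponentMk ⟨b, hb⟩) := by
          show (G.induce C').connectedComponentMk (φ ⟨a, ha⟩)
            = (G.induce C').connectedComponentMk (φ ⟨b, hb⟩)
          apply SimpleGraph.ConnectedComponent.sound
          have h1 : (G.induce C').Adj (φ ⟨a, ha⟩) ⟨w, Set.mem_insert _ _⟩ := by
            exact haw
          have h2 : (G.induce C').Adj ⟨w, Set.mem_insert _ _⟩ (φ ⟨b, hb⟩) := by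
            exact hwb
          exact h1.reachable.trans h2.reachable
        have := hinj hfa
        exact SimpleGraph.ConnectedComponent.exact this
      haveI : Fintype ((G.induce C).ConnectedComponent) := Fintype.ofFinite _
      haveI : Fintype ((G.induce C').ConnectedComponent) := Fintype.ofFinite _
      have hlt : Nat.card ((G.induce C').ConnectedComponent)
          < Nat.card ((G.induce C).ConnectedComponent) := by
        rw [Nat.card_eq_fintype_card, Nat.card_eq_fintype_card]
        exact Fintype.card_lt_of_surjective_not_injective f hsurj hninj
      obtain ⟨D, hCD, hDvc, hDconn, hDcard⟩ :=
        ih C' (by omega) ⟨w, Set.mem_insert _ _⟩ hvc'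
      exact ⟨D, hsub.trans hCD, hDvc, hDconn, by omega⟩

/-- For every finite connected simple graph `G` with at least one edge,
`τ(G) ≤ τ_c(G) ≤ 2τ(G) - 1`; in particular `1 ≤ τ_c(G)/τ(G) < 2`. -/
theorem poc_bounds {V : Type} [Fintype V] (G : SimpleGraph V)
    (hconn : G.Connected) (hedge : G.edgeSet.Nonempty) :
    tau G ≤ tauc G ∧ tauc G ≤ 2 * tau G - 1 ∧
      1 ≤ (tauc G : ℚ) / (tau G : ℚ) ∧ (tauc G : ℚ) / (tau G : ℚ) < 2 := by
  obtain ⟨u, v, huv⟩ : ∃ u v, G.Adj u v := by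
    obtain ⟨e, he⟩ := hedge
    exact Sym2.ind (fun u v he => ⟨u, v, he⟩) e he
  -- the set defining `tau` is attained
  have htne : {n | ∃ C : Set V, _root_.IsVertexCover G C ∧ C.ncard = n}.Nonempty :=
    ⟨(Set.univ : Set V).ncard, Set.univ, fun _ _ _ => Or.inl (Set.mem_univ _), rfl⟩
  obtain ⟨C, hCvc, hCcard⟩ : ∃ C : Set V, _root_.IsVertexCover G C ∧ C.ncard = tau G :=
    Nat.sInf_mem htne
  have hCne : C.Nonempty := by
    rcases hCvc huv with h | h
    · exact ⟨u, h⟩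
    · exact ⟨v, h⟩
  have htau1 : 1 ≤ tau G := by
    rw [← hCcard]
    exact (Set.ncard_pos C.toFinite).mpr hCne
  -- extend C to a connected vertex cover
  obtain ⟨D, hCD, hDvc, hDconn, hDcard⟩ :=
    extend_cover G hconn (Nat.card ((G.induce C).ConnectedComponent)) C le_rfl hCne hCvc
  -- number of components is at most |C|
  have hcomp : Nat.card ((G.induce C).ConnectedComponent) ≤ C.ncard := by
    rw [← Nat.card_coe_set_eq]
    exact Nat.card_le_card_of_surjective _ (Quot.mk_surjective)
  have htc_le : tauc G ≤ 2 * tau G - 1 := by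
    have h1 : tauc G ≤ D.ncard := Nat.sInf_le ⟨D, ⟨hDvc, hDconn⟩, rfl⟩
    omega
  -- tauc is attained by a vertex cover, giving tau ≤ tauc
  have htcne : {n | ∃ C : Set V, IsConnectedVertexCover G C ∧ C.ncard = n}.Nonempty :=
    ⟨D.ncard, D, ⟨hDvc, hDconn⟩, rfl⟩
  obtain ⟨E, ⟨hEvc, _⟩, hEcard⟩ :
      ∃ E : Set V, IsConnectedVertexCover G E ∧ E.ncard = tauc G :=
    Nat.sInf_mem htcne
  have hle : tau G ≤ tauc G := Nat.sInf_le ⟨E, hEvc, hEcard⟩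
  refine ⟨hle, htc_le, ?_, ?_⟩
  · rw [le_div_iff₀ (by exact_mod_cast htau1 : (0:ℚ) < tau G), one_mul]
    exact_mod_cast hle
  · rw [div_lt_iff₀ (by exact_mod_cast htau1 : (0:ℚ) < tau G)]
    have : tauc G < 2 * tau G := by omega
    calc (tauc G : ℚ) < ((2 * tau G : ℕ) : ℚ) := by exact_mod_cast this
      _ = 2 * (tau G : ℚ) := by push_cast; ring
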